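/- (Theorem 4.1, Eq. (21).) For every j ∈ {1,2}, every t > 0, and every x with min(v₂t, 0) < x < v₁t, one has 1_{v₂t<x<v₁t}·e^{−ξt}·λ²·τ(x,t)^{2−j}(t − τ(x,t))^{j−1}/((v₁−v₂)(1+λt)²) + sgn(v_j)·1_{0<x/v_j<t}·ξe^{−ξx/v_j}/(v_j + λx) + ξ·∫₀^t e^{−ξs}·1_{v₂s<x<v₁s}·λ²·τ(x,s)^{2−j}(s − τ(x,s))^{j−1}/((v₁−v₂)(1+λs)²) ds = P_{j,j}(x,t). (The second summand on the left is the contribution to the reset law of the singular component of mass 1/(1+λs) at x = v_j s of the reset-free law.) -/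

import Mathlib

open MeasureTheory Real Filter Topology Set

noncomputable section

namespace TelegraphReset

open Classical in
/-- Real-valued indicator of a proposition. -/
def ind (P : Prop) : ℝ := if P then 1 else 0

/-- Generalized incomplete gamma function `Γ(0, z₀, z₁) = ∫_{z₀}^{z₁} u⁻¹ e^{-u} du`. -/
def iGamma (z₀ z₁ : ℝ) : ℝ := ∫ u in z₀..z₁, u⁻¹ * Real.exp (-u)

/-- Upper incomplete gamma function `Γ(0, a) = ∫_a^∞ u⁻¹ e^{-u} du`. -/
def uGamma (a : ℝ) : ℝ := ∫ u in Set.Ioi a, u⁻¹ * Real.exp (-u)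

/-- `τ(x,t) = (x - v₂ t)/(v₁ - v₂)`. -/
def tauF (v₁ v₂ x t : ℝ) : ℝ := (x - v₂ * t) / (v₁ - v₂)

/-- The two velocities, indexed by `1` and `2`. -/
def vel (v₁ v₂ : ℝ) : ℕ → ℝ := fun n => if n = 1 then v₁ else v₂

/-- `Γ_λ^ξ(x,t)`, defined piecewise according to the sign of `v₂`. -/
def GamL (v₁ v₂ lam xi x t : ℝ) : ℝ :=
  if v₂ < 0 then iGamma ((max (x / v₁) (x / v₂) + 1 / lam) * xi) ((t + 1 / lam) * xi)
  else iGamma ((x / v₁ + 1 / lam) * xi) ((min (x / v₂) t + 1 / lam) * xi)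

/-- `Θ_λ^ξ(x,t)`, defined piecewise according to the sign of `v₂`. -/
def Theta (v₁ v₂ lam xi x t : ℝ) : ℝ :=
  if v₂ < 0 then
    Real.exp (-(xi * max (x / v₁) (x / v₂))) / (1 + lam * max (x / v₁) (x / v₂))
      - Real.exp (-(xi * t)) / (1 + lam * t)
  else
    Real.exp (-(xi * (x / v₁))) / (1 + lam * (x / v₁))
      - Real.exp (-(xi * min (x / v₂) t)) / (1 + lam * min (x / v₂) t)

/-- Closed-form sub-density `P_{j,j}(x,t)` (Eq. (21)). -/
def Pss (v₁ v₂ lam xi : ℝ) (j : ℕ) (x t : ℝ) : ℝ :=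
  ind (v₂ * t < x ∧ x < v₁ * t) * Real.exp (-(xi * t)) * lam ^ 2 *
      tauF v₁ v₂ x t ^ (2 - j) * (t - tauF v₁ v₂ x t) ^ (j - 1) /
      ((v₁ - v₂) * (1 + lam * t) ^ 2)
  + Real.sign (vel v₁ v₂ j) * ind (0 < x / vel v₁ v₂ j ∧ x / vel v₁ v₂ j < t) * xi *
      Real.exp (-(xi * (x / vel v₁ v₂ j))) / (vel v₁ v₂ j + lam * x)
  + ind (min (v₂ * t) 0 < x ∧ x < v₁ * t) *
      ((-1 : ℝ) ^ (3 - j) * (xi * (vel v₁ v₂ (3 - j) + lam * x) / (v₁ - v₂) ^ 2) *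
          Theta v₁ v₂ lam xi x t
        + (-1 : ℝ) ^ j * (xi * Real.exp (xi / lam) / (v₁ - v₂) ^ 2) *
            (vel v₁ v₂ (3 - j) * (lam + xi) / lam + x * xi) * GamL v₁ v₂ lam xi x t)

/-- Closed-form sub-density `P_{3-j,j}(x,t)` (Eq. (22)). -/
def Pos (v₁ v₂ lam xi : ℝ) (j : ℕ) (x t : ℝ) : ℝ :=
  ind (v₂ * t < x ∧ x < v₁ * t) * Real.exp (-(xi * t)) * lam *
      (1 + lam * tauF v₁ v₂ x t ^ (j - 1) * (t - tauF v₁ v₂ x t) ^ (2 - j)) /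
      ((v₁ - v₂) * (1 + lam * t) ^ 2)
  + ind (min (v₂ * t) 0 < x ∧ x < v₁ * t) *
      ((-1 : ℝ) ^ j * (xi * (vel v₁ v₂ (3 - j) + lam * x) / (v₁ - v₂) ^ 2) *
          Theta v₁ v₂ lam xi x t
        + (-1 : ℝ) ^ (3 - j) * (xi * Real.exp (xi / lam) / (v₁ - v₂) ^ 2) *
            (vel v₁ v₂ j * (lam + xi) / lam + x * xi
              + (-1 : ℝ) ^ j * xi * (v₁ - v₂) / lam) * GamL v₁ v₂ lam xi x t)

/-- Closed-form reset density `p̃(x,t|v_j)` (Eq. (37)). -/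
def pTil (v₁ v₂ lam xi : ℝ) (j : ℕ) (x t : ℝ) : ℝ :=
  Real.sign (vel v₁ v₂ j) * ind (0 < x / vel v₁ v₂ j ∧ x / vel v₁ v₂ j < t) * xi *
      Real.exp (-(xi * (x / vel v₁ v₂ j))) / (vel v₁ v₂ j + lam * x)
  + ind (v₂ * t < x ∧ x < v₁ * t) * lam * Real.exp (-(xi * t)) /
      ((v₁ - v₂) * (1 + lam * t))
  + ind (min (v₂ * t) 0 < x ∧ x < v₁ * t) *
      (xi * Real.exp (xi / lam) / (v₁ - v₂)) * GamL v₁ v₂ lam xi x t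

/-- First moment `E_j[X̃(t)]` (Eq. (54)). -/
def Emom (v₁ v₂ lam xi : ℝ) (j : ℕ) (t : ℝ) : ℝ :=
  (1 - Real.exp (-(xi * t))) *
      ((v₁ + v₂) / (2 * xi) + (vel v₁ v₂ j - vel v₁ v₂ (3 - j)) / (2 * lam))
  - xi * Real.exp (xi / lam) * (vel v₁ v₂ j - vel v₁ v₂ (3 - j)) / (2 * lam ^ 2) *
      iGamma (xi / lam) (xi / lam * (1 + lam * t))
  + t * Real.exp (-(xi * t)) * (vel v₁ v₂ j - vel v₁ v₂ (3 - j)) / (2 * (1 + lam * t))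

/-- Second moment `E_j[X̃²(t)]` (Eq. (55)). -/
def Smom (v₁ v₂ lam xi : ℝ) (j : ℕ) (t : ℝ) : ℝ :=
  (1 - Real.exp (-(xi * t))) *
      (2 * (v₁ ^ 2 + v₁ * v₂ + v₂ ^ 2) / (3 * xi ^ 2)
        + (2 * vel v₁ v₂ j ^ 2 - v₁ * v₂ - vel v₁ v₂ (3 - j) ^ 2) / (3 * lam) *
            (1 / xi - 1 / lam))
  - t * Real.exp (-(xi * t)) *
      (2 * (v₁ ^ 2 + v₁ * v₂ + v₂ ^ 2) / (3 * xi)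
        + (2 * vel v₁ v₂ j ^ 2 - v₁ * v₂ - vel v₁ v₂ (3 - j) ^ 2) /
            (3 * lam * (1 + lam * t)))
  + xi * Real.exp (xi / lam) *
      (2 * vel v₁ v₂ j ^ 2 - v₁ * v₂ - vel v₁ v₂ (3 - j) ^ 2) / (3 * lam ^ 3) *
      iGamma (xi / lam) (xi / lam * (1 + lam * t))

/-- First moment of the reset-free process. -/
def m1 (v₁ v₂ lam : ℝ) (j : ℕ) (t : ℝ) : ℝ :=
  (v₁ + v₂) * t / 2 + (vel v₁ v₂ j - vel v₁ v₂ (3 - j)) * t / (2 * (1 + lam * t))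

/-- Second moment of the reset-free process (Eq. (63)). -/
def m2 (v₁ v₂ lam : ℝ) (j : ℕ) (t : ℝ) : ℝ :=
  t ^ 2 * (3 * vel v₁ v₂ j ^ 2 + lam * t * (v₁ ^ 2 + v₁ * v₂ + v₂ ^ 2)) /
    (3 * (1 + lam * t))


lemma phi_integrable {a b : ℝ} (ha : 0 < a) (hb : 0 < b) :
    IntervalIntegrable (fun u : ℝ => u⁻¹ * Real.exp (-u)) MeasureTheory.volume a b := by
  apply ContinuousOn.intervalIntegrable
  have hsub : Set.uIcc a b ⊆ {u : ℝ | u ≠ 0} := by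
    intro u hu
    have : min a b ≤ u := (Set.mem_uIcc.mp hu).elim (fun h => le_trans (min_le_left _ _) h.1)
      (fun h => le_trans (min_le_right _ _) h.1)
    have : 0 < u := lt_of_lt_of_le (lt_min ha hb) this
    exact ne_of_gt this
  apply ContinuousOn.mul
  · refine continuousOn_inv₀.mono ?_
    intro u hu
    simpa using hsub hu
  · exact (Real.continuous_exp.comp continuous_neg).continuousOn

lemma core (lam xi w x L U : ℝ) (hlam : 0 < lam) (hxi : 0 < xi)
    (hL : 0 ≤ L) (hLU : L ≤ U) :
    ∫ s in L..U, xi * Real.exp (-(xi * s)) * lam ^ 2 * (x - w * s) / (1 + lam * s) ^ 2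
      = xi * (w + lam * x) *
          (Real.exp (-(xi * L)) / (1 + lam * L) - Real.exp (-(xi * U)) / (1 + lam * U))
        - xi * Real.exp (xi / lam) * (w * (lam + xi) / lam + x * xi) *
            (∫ u in ((L + 1 / lam) * xi)..((U + 1 / lam) * xi), u⁻¹ * Real.exp (-u)) := by
  have hlamne : lam ≠ 0 := ne_of_gt hlam
  have hxine : xi ≠ 0 := ne_of_gt hxi
  set A := xi * (w + lam * x) with hA
  set B := -(xi * Real.exp (xi / lam) * (w * (lam + xi) / lam + x * xi)) with hB
  set a := (L + 1 / lam) * xi with ha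
  have ha0 : 0 < a := by
    have : 0 < L + 1 / lam := by positivity
    exact mul_pos this hxi
  set F := fun s : ℝ => -(A * (Real.exp (-(xi * s)) / (1 + lam * s))) +
      B * ∫ u in a..((s + 1 / lam) * xi), u⁻¹ * Real.exp (-u) with hF
  have key : ∀ s ∈ Set.uIcc L U, HasDerivAt F
      (xi * Real.exp (-(xi * s)) * lam ^ 2 * (x - w * s) / (1 + lam * s) ^ 2) s := by
    intro s hs
    rw [Set.uIcc_of_le hLU] at hs
    have hs0 : 0 ≤ s := le_trans hL hs.1
    have hden : (0:ℝ) < 1 + lam * s := by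
      have := mul_nonneg hlam.le hs0; linarith
    have hzpos : 0 < (s + 1 / lam) * xi := by
      have : 0 < s + 1 / lam := by positivity
      exact mul_pos this hxi
    have h1 : HasDerivAt (fun u : ℝ => Real.exp (-(xi * u)))
        (Real.exp (-(xi * s)) * (-xi)) s := by
      have hlin : HasDerivAt (fun u : ℝ => -(xi * u)) (-xi) s := by
        have := ((hasDerivAt_id s).const_mul xi).neg
        simp only [id, mul_one] at this
        exact this
      exact hlin.exp
    have h2 : HasDerivAt (fun u : ℝ => 1 + lam * u) lam s := by
      simpa using ((hasDerivAt_id s).const_mul lam).const_add 1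
    have h3 := h1.div h2 (ne_of_gt hden)
    have hz : HasDerivAt (fun u : ℝ => (u + 1 / lam) * xi) xi s := by
      simpa using ((hasDerivAt_id s).add_const (1 / lam)).mul_const xi
    have hmeas : Measurable (fun u : ℝ => u⁻¹ * Real.exp (-u)) :=
      (measurable_inv).mul (Real.continuous_exp.comp continuous_neg).measurable
    have hφc : ContinuousAt (fun u : ℝ => u⁻¹ * Real.exp (-u)) ((s + 1 / lam) * xi) := by
      apply ContinuousAt.mul
      · exact continuousAt_inv₀ (ne_of_gt hzpos)
      · exact (Real.continuous_exp.comp continuous_neg).continuousAt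
    have hint : IntervalIntegrable (fun u : ℝ => u⁻¹ * Real.exp (-u))
        MeasureTheory.volume a ((s + 1 / lam) * xi) := phi_integrable ha0 hzpos
    have h4 : HasDerivAt (fun r : ℝ => ∫ u in a..r, u⁻¹ * Real.exp (-u))
        (((s + 1 / lam) * xi)⁻¹ * Real.exp (-((s + 1 / lam) * xi))) ((s + 1 / lam) * xi) :=
      intervalIntegral.integral_hasDerivAt_right hint
        ⟨Set.univ, Filter.univ_mem,
          (hmeas.stronglyMeasurable.aestronglyMeasurable).restrict⟩ hφc
    have h5 := h4.comp s hz
    have hFd := ((h3.const_mul A).neg).add (h5.const_mul B)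
    refine hFd.congr_deriv ?_
    have hexp : Real.exp (-((s + 1 / lam) * xi))
        = Real.exp (-(xi * s)) * Real.exp (-(xi / lam)) := by
      rw [← Real.exp_add]; congr 1; field_simp; ring
    rw [hexp, show Real.exp (-(xi / lam)) = (Real.exp (xi / lam))⁻¹ from Real.exp_neg _, hB, hA]
    have hE : Real.exp (xi / lam) ≠ 0 := Real.exp_ne_zero _
    field_simp
    ring
  have hint2 : IntervalIntegrable
      (fun s => xi * Real.exp (-(xi * s)) * lam ^ 2 * (x - w * s) / (1 + lam * s) ^ 2)
      MeasureTheory.volume L U := by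
    apply ContinuousOn.intervalIntegrable
    apply ContinuousOn.div
    · exact (((continuous_const.mul (Real.continuous_exp.comp (continuous_neg.comp
        (continuous_const.mul continuous_id)))).mul continuous_const).mul
        (continuous_const.sub (continuous_const.mul continuous_id))).continuousOn
    · exact ((continuous_const.add (continuous_const.mul continuous_id)).pow 2).continuousOn
    · intro s hs
      rw [Set.uIcc_of_le hLU] at hs
      have hs0 : 0 ≤ s := le_trans hL hs.1
      have : (0:ℝ) < 1 + lam * s := by
        have := mul_nonneg hlam.le hs0; linarith
      positivity
  rw [intervalIntegral.integral_eq_sub_of_hasDerivAt key hint2]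
  simp only [hF, ← ha, intervalIntegral.integral_same, mul_zero, add_zero]
  rw [hA, hB]
  ring

lemma integral_ind_Ioi {f g : ℝ → ℝ} {L t : ℝ} (hL : 0 ≤ L) (hLt : L ≤ t)
    (hfg : ∀ s, f s = (Set.Ioi L).indicator g s) :
    ∫ s in (0:ℝ)..t, f s = ∫ s in L..t, g s := by
  rw [intervalIntegral.integral_of_le (le_trans hL hLt),
      intervalIntegral.integral_of_le hLt]
  simp_rw [hfg]
  rw [MeasureTheory.setIntegral_indicator measurableSet_Ioi]
  congr 1
  rw [Set.Ioc_inter_Ioi, max_eq_right hL]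

lemma integral_ind_Ioo {f g : ℝ → ℝ} {L R t : ℝ} (hL : 0 ≤ L) (hLR : L < R) (hLt : L < t)
    (hfg : ∀ s, f s = (Set.Ioo L R).indicator g s) :
    ∫ s in (0:ℝ)..t, f s = ∫ s in L..(min R t), g s := by
  have hLm : L ≤ min R t := le_of_lt (lt_min hLR hLt)
  rw [intervalIntegral.integral_of_le (le_trans hL (le_trans hLm (min_le_right _ _))),
      intervalIntegral.integral_of_le hLm]
  simp_rw [hfg]
  rw [MeasureTheory.setIntegral_indicator measurableSet_Ioo]
  rcases le_or_gt R t with h | h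
  · have hset : Set.Ioc 0 t ∩ Set.Ioo L R = Set.Ioo L R := by
      apply Set.inter_eq_right.mpr
      rintro s ⟨h1, h2⟩
      exact ⟨lt_of_le_of_lt hL h1, le_trans h2.le h⟩
    rw [min_eq_left h, hset, MeasureTheory.integral_Ioc_eq_integral_Ioo]
  · have hset : Set.Ioc 0 t ∩ Set.Ioo L R = Set.Ioc L t := by
      ext s
      constructor
      · rintro ⟨a, b⟩; exact ⟨b.1, a.2⟩
      · rintro ⟨a, b⟩; exact ⟨⟨lt_of_le_of_lt hL a, b⟩, a, lt_of_le_of_lt b h⟩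
    rw [min_eq_right h.le, hset]

set_option maxHeartbeats 1000000 in
/-- Theorem 4.1, Eq. (21): the reset-renewal transform of the same-velocity
sub-density equals the closed form `P_{j,j}`. -/
theorem eq21 (v₁ v₂ lam xi : ℝ) (hlam : 0 < lam) (hxi : 0 < xi)
    (hv : v₂ < v₁) (hv1 : v₁ ≠ 0) (hv2 : v₂ ≠ 0)
    (hcase : (v₂ < 0 ∧ 0 < v₁) ∨ (0 < v₂ ∧ v₂ < v₁)) :
    ∀ j : ℕ, (j = 1 ∨ j = 2) → ∀ t : ℝ, 0 < t → ∀ x : ℝ,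
      min (v₂ * t) 0 < x → x < v₁ * t →
      ind (v₂ * t < x ∧ x < v₁ * t) * Real.exp (-(xi * t)) * lam ^ 2 *
          tauF v₁ v₂ x t ^ (2 - j) * (t - tauF v₁ v₂ x t) ^ (j - 1) /
          ((v₁ - v₂) * (1 + lam * t) ^ 2)
      + Real.sign (vel v₁ v₂ j) * ind (0 < x / vel v₁ v₂ j ∧ x / vel v₁ v₂ j < t) * xi *
          Real.exp (-(xi * (x / vel v₁ v₂ j))) / (vel v₁ v₂ j + lam * x)
      + xi * ∫ s in (0:ℝ)..t,
          Real.exp (-(xi * s)) * ind (v₂ * s < x ∧ x < v₁ * s) * lam ^ 2 *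
            tauF v₁ v₂ x s ^ (2 - j) * (s - tauF v₁ v₂ x s) ^ (j - 1) /
            ((v₁ - v₂) * (1 + lam * s) ^ 2)
      = Pss v₁ v₂ lam xi j x t := by
  intro j hj t ht x hx1 hx2
  have hc : (0:ℝ) < v₁ - v₂ := sub_pos.mpr hv
  have hcne : v₁ - v₂ ≠ 0 := ne_of_gt hc
  have hxine : xi ≠ 0 := ne_of_gt hxi
  have hlamne : lam ≠ 0 := ne_of_gt hlam
  unfold Pss
  congr 1
  have hind : ind (min (v₂ * t) 0 < x ∧ x < v₁ * t) = 1 := by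
    unfold ind; rw [if_pos ⟨hx1, hx2⟩]
  rw [hind, one_mul]
  rcases hcase with ⟨h2neg, h1pos⟩ | ⟨h2pos, _⟩
  · -- case v₂ < 0 < v₁
    set L := max (x / v₁) (x / v₂) with hLdef
    have hL0 : 0 ≤ L := by
      rcases le_or_gt 0 x with hx0 | hx0
      · exact le_trans (div_nonneg hx0 h1pos.le) (le_max_left _ _)
      · exact le_trans (le_of_lt (div_pos_of_neg_of_neg hx0 h2neg)) (le_max_right _ _)
    have hv2t : v₂ * t < x := by
      have hm : min (v₂ * t) 0 = v₂ * t :=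
        min_eq_left (le_of_lt (mul_neg_of_neg_of_pos h2neg ht))
      rwa [hm] at hx1
    have hLt : L < t := by
      apply max_lt
      · rw [div_lt_iff₀ h1pos, mul_comm]; exact hx2
      · rw [div_lt_iff_of_neg h2neg, mul_comm]; exact hv2t
    have hcond : ∀ s : ℝ, (v₂ * s < x ∧ x < v₁ * s) ↔ L < s := by
      intro s
      rw [hLdef, max_lt_iff]
      constructor
      · rintro ⟨ha, hb⟩
        refine ⟨?_, ?_⟩
        · rw [div_lt_iff₀ h1pos, mul_comm]; exact hb
        · rw [div_lt_iff_of_neg h2neg, mul_comm]; exact ha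
      · rintro ⟨ha, hb⟩
        rw [div_lt_iff₀ h1pos, mul_comm] at ha
        rw [div_lt_iff_of_neg h2neg, mul_comm] at hb
        exact ⟨hb, ha⟩
    have hden : ∀ s : ℝ, L < s → (0:ℝ) < 1 + lam * s := by
      intro s hs
      have h0 : 0 ≤ s := le_trans hL0 hs.le
      nlinarith
    rcases hj with rfl | rfl
    · -- j = 1
      have hred := integral_ind_Ioi (t := t)
        (f := fun s => Real.exp (-(xi * s)) * ind (v₂ * s < x ∧ x < v₁ * s) * lam ^ 2 *
            tauF v₁ v₂ x s ^ (2 - 1) * (s - tauF v₁ v₂ x s) ^ (1 - 1) /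
            ((v₁ - v₂) * (1 + lam * s) ^ 2))
        (g := fun s => (xi * (v₁ - v₂) ^ 2)⁻¹ *
            (xi * Real.exp (-(xi * s)) * lam ^ 2 * (x - v₂ * s) / (1 + lam * s) ^ 2))
        hL0 hLt.le ?_
      · rw [hred, intervalIntegral.integral_const_mul,
          core lam xi v₂ x L t hlam hxi hL0 hLt.le]
        simp only [Theta, GamL, if_pos h2neg, iGamma, vel]
        rw [← hLdef]
        norm_num
        have hd1 : (1:ℝ) + lam * L ≠ 0 := by
          have : 0 ≤ lam * L := mul_nonneg hlam.le hL0
          positivity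
        have hd2 : (1:ℝ) + lam * t ≠ 0 := by
          have : 0 ≤ lam * t := mul_nonneg hlam.le ht.le
          positivity
        field_simp
        ring
      · intro s
        by_cases hs : L < s
        · rw [Set.indicator_of_mem (Set.mem_Ioi.mpr hs)]
          have h1 : ind (v₂ * s < x ∧ x < v₁ * s) = 1 := by
            unfold ind; rw [if_pos ((hcond s).mpr hs)]
          simp only [h1]
          have hds := hden s hs
          simp only [show (2-1:ℕ) = 1 from rfl, show (1-1:ℕ) = 0 from rfl, pow_one, pow_zero,
            tauF]
          field_simp
        · rw [Set.indicator_of_notMem (by simpa using hs)]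
          have h0 : ind (v₂ * s < x ∧ x < v₁ * s) = 0 := by
            unfold ind; rw [if_neg (fun hcc => hs ((hcond s).mp hcc))]
          simp only [h0]
          simp
    · -- j = 2
      have hred := integral_ind_Ioi (t := t)
        (f := fun s => Real.exp (-(xi * s)) * ind (v₂ * s < x ∧ x < v₁ * s) * lam ^ 2 *
            tauF v₁ v₂ x s ^ (2 - 2) * (s - tauF v₁ v₂ x s) ^ (2 - 1) /
            ((v₁ - v₂) * (1 + lam * s) ^ 2))
        (g := fun s => (-(xi * (v₁ - v₂) ^ 2))⁻¹ *
            (xi * Real.exp (-(xi * s)) * lam ^ 2 * (x - v₁ * s) / (1 + lam * s) ^ 2))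
        hL0 hLt.le ?_
      · rw [hred, intervalIntegral.integral_const_mul,
          core lam xi v₁ x L t hlam hxi hL0 hLt.le]
        simp only [Theta, GamL, if_pos h2neg, iGamma, vel]
        rw [← hLdef]
        norm_num
        have hd1 : (1:ℝ) + lam * L ≠ 0 := by
          have : 0 ≤ lam * L := mul_nonneg hlam.le hL0
          positivity
        have hd2 : (1:ℝ) + lam * t ≠ 0 := by
          have : 0 ≤ lam * t := mul_nonneg hlam.le ht.le
          positivity
        field_simp
        ring
      · intro s
        by_cases hs : L < s
        · rw [Set.indicator_of_mem (Set.mem_Ioi.mpr hs)]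
          have h1 : ind (v₂ * s < x ∧ x < v₁ * s) = 1 := by
            unfold ind; rw [if_pos ((hcond s).mpr hs)]
          simp only [h1]
          have hds := hden s hs
          simp only [show (2-2:ℕ) = 0 from rfl, show (2-1:ℕ) = 1 from rfl, pow_one, pow_zero,
            tauF]
          field_simp
          ring
        · rw [Set.indicator_of_notMem (by simpa using hs)]
          have h0 : ind (v₂ * s < x ∧ x < v₁ * s) = 0 := by
            unfold ind; rw [if_neg (fun hcc => hs ((hcond s).mp hcc))]
          simp only [h0]
          simp
  · -- case 0 < v₂ < v₁
    have h1pos : 0 < v₁ := lt_trans h2pos hv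
    have hx0 : 0 < x := by
      have hm : min (v₂ * t) 0 = 0 := min_eq_right (mul_pos h2pos ht).le
      rwa [hm] at hx1
    have hnneg : ¬ (v₂ < 0) := not_lt.mpr h2pos.le
    have hL0 : 0 ≤ x / v₁ := (div_pos hx0 h1pos).le
    have hLR : x / v₁ < x / v₂ := div_lt_div_of_pos_left hx0 h2pos hv
    have hLt : x / v₁ < t := by rw [div_lt_iff₀ h1pos, mul_comm]; exact hx2
    have hLU : x / v₁ ≤ min (x / v₂) t := le_of_lt (lt_min hLR hLt)
    have hcond : ∀ s : ℝ, (v₂ * s < x ∧ x < v₁ * s) ↔ (x / v₁ < s ∧ s < x / v₂) := by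
      intro s
      constructor
      · rintro ⟨ha, hb⟩
        refine ⟨?_, ?_⟩
        · rw [div_lt_iff₀ h1pos, mul_comm]; exact hb
        · rw [lt_div_iff₀ h2pos, mul_comm]; exact ha
      · rintro ⟨ha, hb⟩
        rw [div_lt_iff₀ h1pos, mul_comm] at ha
        rw [lt_div_iff₀ h2pos, mul_comm] at hb
        exact ⟨hb, ha⟩
    have hden : ∀ s : ℝ, x / v₁ < s → (0:ℝ) < 1 + lam * s := by
      intro s hs
      have h0 : 0 ≤ s := le_trans hL0 hs.le
      nlinarith
    rcases hj with rfl | rfl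
    · -- j = 1
      have hred := integral_ind_Ioo (t := t)
        (f := fun s => Real.exp (-(xi * s)) * ind (v₂ * s < x ∧ x < v₁ * s) * lam ^ 2 *
            tauF v₁ v₂ x s ^ (2 - 1) * (s - tauF v₁ v₂ x s) ^ (1 - 1) /
            ((v₁ - v₂) * (1 + lam * s) ^ 2))
        (g := fun s => (xi * (v₁ - v₂) ^ 2)⁻¹ *
            (xi * Real.exp (-(xi * s)) * lam ^ 2 * (x - v₂ * s) / (1 + lam * s) ^ 2))
        hL0 hLR hLt ?_
      · rw [hred, intervalIntegral.integral_const_mul,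
          core lam xi v₂ x (x / v₁) (min (x / v₂) t) hlam hxi hL0 hLU]
        simp only [Theta, GamL, if_neg hnneg, iGamma, vel]
        set p := x / v₁ with hp
        set q := min (x / v₂) t with hq
        norm_num
        have hd1 : (1:ℝ) + lam * p ≠ 0 := by
          have : 0 ≤ lam * p := mul_nonneg hlam.le hL0
          positivity
        have hd2 : (1:ℝ) + lam * q ≠ 0 := by
          have h0 : 0 ≤ q := le_trans hL0 hLU
          have : 0 ≤ lam * q := mul_nonneg hlam.le h0
          positivity
        field_simp
        ring
      · intro s
        by_cases hs : x / v₁ < s ∧ s < x / v₂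
        · rw [Set.indicator_of_mem (Set.mem_Ioo.mpr hs)]
          have h1 : ind (v₂ * s < x ∧ x < v₁ * s) = 1 := by
            unfold ind; rw [if_pos ((hcond s).mpr hs)]
          simp only [h1]
          have hds := hden s hs.1
          simp only [show (2-1:ℕ) = 1 from rfl, show (1-1:ℕ) = 0 from rfl, pow_one, pow_zero,
            tauF]
          field_simp
        · rw [Set.indicator_of_notMem (by simpa using hs)]
          have h0 : ind (v₂ * s < x ∧ x < v₁ * s) = 0 := by
            unfold ind; rw [if_neg (fun hcc => hs ((hcond s).mp hcc))]
          simp only [h0]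
          simp
    · -- j = 2
      have hred := integral_ind_Ioo (t := t)
        (f := fun s => Real.exp (-(xi * s)) * ind (v₂ * s < x ∧ x < v₁ * s) * lam ^ 2 *
            tauF v₁ v₂ x s ^ (2 - 2) * (s - tauF v₁ v₂ x s) ^ (2 - 1) /
            ((v₁ - v₂) * (1 + lam * s) ^ 2))
        (g := fun s => (-(xi * (v₁ - v₂) ^ 2))⁻¹ *
            (xi * Real.exp (-(xi * s)) * lam ^ 2 * (x - v₁ * s) / (1 + lam * s) ^ 2))
        hL0 hLR hLt ?_
      · rw [hred, intervalIntegral.integral_const_mul,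
          core lam xi v₁ x (x / v₁) (min (x / v₂) t) hlam hxi hL0 hLU]
        simp only [Theta, GamL, if_neg hnneg, iGamma, vel]
        set p := x / v₁ with hp
        set q := min (x / v₂) t with hq
        norm_num
        have hd1 : (1:ℝ) + lam * p ≠ 0 := by
          have : 0 ≤ lam * p := mul_nonneg hlam.le hL0
          positivity
        have hd2 : (1:ℝ) + lam * q ≠ 0 := by
          have h0 : 0 ≤ q := le_trans hL0 hLU
          have : 0 ≤ lam * q := mul_nonneg hlam.le h0
          positivity
        field_simp
        ring
      · intro s
        by_cases hs : x / v₁ < s ∧ s < x / v₂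
        · rw [Set.indicator_of_mem (Set.mem_Ioo.mpr hs)]
          have h1 : ind (v₂ * s < x ∧ x < v₁ * s) = 1 := by
            unfold ind; rw [if_pos ((hcond s).mpr hs)]
          simp only [h1]
          have hds := hden s hs.1
          simp only [show (2-2:ℕ) = 0 from rfl, show (2-1:ℕ) = 1 from rfl, pow_one, pow_zero,
            tauF]
          field_simp
          ring
        · rw [Set.indicator_of_notMem (by simpa using hs)]
          have h0 : ind (v₂ * s < x ∧ x < v₁ * s) = 0 := by
            unfold ind; rw [if_neg (fun hcc => hs ((hcond s).mp hcc))]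
          simp only [h0]
          simp


end TelegraphReset
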